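/- There exists a simple set: a set A ⊆ ℕ such that A is computably enumerable, the complement ℕ \ A is infinite, and A ∩ W ≠ ∅ for every infinite computably enumerable set W ⊆ ℕ. -/

import Mathlib

/-- A set of natural numbers is computably enumerable if it is the domain of a
partial computable function. -/
def CE (S : Set ℕ) : Prop :=
  ∃ f : ℕ →. ℕ, Nat.Partrec f ∧ S = f.Dom


open Nat.Partrec (Code)
open Nat.Partrec.Code

namespace SimpleSetAux

/-- Search predicate: `n` codes a pair `(k, x)` such that the `e`-th machine halts on
input `x` within `k` steps and `x > 2e`. -/
def P (e n : ℕ) : Bool :=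
  cond ((evaln n.unpair.1 (Denumerable.ofNat Code e) n.unpair.2).isSome)
    (decide (2 * e < n.unpair.2)) false

/-- Least `n < k` with `P e n`, if any. -/
def G (e k : ℕ) : Option ℕ :=
  (List.range k).foldl (fun acc n => acc <|> (if P e n then some n else none)) none

def F (e k : ℕ) : Option ℕ := (G e k).map fun n => n.unpair.2

theorem G_succ (e k : ℕ) :
    G e (k + 1) = (G e k <|> (if P e k then some k else none)) := by
  unfold G
  rw [List.range_succ, List.foldl_append]
  rfl

theorem G_none {e k : ℕ} (h : G e k = none) : ∀ m < k, P e m = false := by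
  induction k with
  | zero => intro m hm; omega
  | succ k ih =>
    rw [G_succ] at h
    rcases hG : G e k with _ | n
    · rw [hG] at h
      simp only [Option.orElse_eq_orElse, Option.orElse_none] at h
      intro m hm
      rcases Nat.lt_succ_iff_lt_or_eq.1 hm with hm | rfl
      · exact ih hG m hm
      · by_contra hP
        simp [Bool.not_eq_false] at hP
        simp [hP] at h
    · rw [hG] at h; simp at h

theorem G_sound {e k n : ℕ} (h : G e k = some n) :
    n < k ∧ P e n = true ∧ ∀ m < n, P e m = false := by
  induction k with
  | zero => simp [G] at h
  | succ k ih =>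
    rw [G_succ] at h
    rcases hG : G e k with _ | n'
    · rw [hG] at h
      simp only [Option.orElse_eq_orElse, Option.orElse_none] at h
      by_cases hP : P e k
      · simp only [hP, if_true, Option.some.injEq] at h
        subst h
        exact ⟨Nat.lt_succ_self _, hP, G_none hG⟩
      · simp [hP] at h
    · rw [hG] at h
      simp only [Option.orElse_eq_orElse, Option.orElse_some, Option.some.injEq] at h
      subst h
      rcases ih hG with ⟨h1, h2, h3⟩
      exact ⟨Nat.lt_succ_of_lt h1, h2, h3⟩

theorem G_exists {e n : ℕ} (h : P e n = true) : ∃ m, G e (n + 1) = some m := by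
  rcases hG : G e (n + 1) with _ | m
  · exact absurd (G_none hG n (Nat.lt_succ_self _)) (by simp [h])
  · exact ⟨m, rfl⟩

theorem G_unique {e k₁ k₂ n₁ n₂ : ℕ} (h₁ : G e k₁ = some n₁) (h₂ : G e k₂ = some n₂) :
    n₁ = n₂ := by
  rcases G_sound h₁ with ⟨-, hp1, hm1⟩
  rcases G_sound h₂ with ⟨-, hp2, hm2⟩
  rcases lt_trichotomy n₁ n₂ with h | h | h
  · rw [hm2 _ h] at hp1; exact absurd hp1 (by simp)
  · exact h
  · rw [hm1 _ h] at hp2; exact absurd hp2 (by simp)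

end SimpleSetAux

namespace SimpleSetAux2
open SimpleSetAux

theorem P_primrec : Primrec₂ P := by
  have h1 : Primrec fun p : ℕ × ℕ =>
      evaln p.2.unpair.1 (Denumerable.ofNat Code p.1) p.2.unpair.2 :=
    primrec_evaln.comp <|
      Primrec.pair
        (Primrec.pair (Primrec.fst.comp (Primrec.unpair.comp Primrec.snd))
          ((Primrec.ofNat Code).comp Primrec.fst))
        (Primrec.snd.comp (Primrec.unpair.comp Primrec.snd))
  have h2 : Primrec fun p : ℕ × ℕ => decide (2 * p.1 < p.2.unpair.2) :=
    (Primrec.nat_lt.comp (Primrec.nat_mul.comp (Primrec.const 2) Primrec.fst)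
      (Primrec.snd.comp (Primrec.unpair.comp Primrec.snd))).decide
  exact (Primrec.cond (Primrec.option_isSome.comp h1) h2 (Primrec.const false)).to₂

theorem G_primrec : Primrec₂ G := by
  have hstep : Primrec₂ fun (p : ℕ × ℕ) (q : Option ℕ × ℕ) =>
      (q.1 <|> (if P p.1 q.2 then some q.2 else none)) := by
    have hc : PrimrecPred fun q : (ℕ × ℕ) × Option ℕ × ℕ => (P q.1.1 q.2.2 = true) := by
      have := P_primrec.comp (Primrec.fst.comp (Primrec.fst (α := ℕ × ℕ) (β := Option ℕ × ℕ)))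
        (Primrec.snd.comp Primrec.snd)
      exact Primrec.primrecPred (this.of_eq fun q => by simp)
    exact (Primrec.option_orElse.comp (Primrec.fst.comp Primrec.snd)
      (Primrec.ite hc (Primrec.option_some.comp (Primrec.snd.comp Primrec.snd))
        (Primrec.const none))).to₂
  exact (Primrec.list_foldl (Primrec.list_range.comp Primrec.snd)
    (Primrec.const none) hstep).to₂

theorem F_primrec : Primrec₂ F :=
  (Primrec.option_map (G_primrec.comp Primrec.fst Primrec.snd)
    ((Primrec.snd.comp (Primrec.unpair.comp Primrec.snd)).to₂)).to₂

def A : Set ℕ := {x | ∃ p : ℕ, F p.unpair.1 p.unpair.2 = some x}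

set_option maxHeartbeats 1000000 in
theorem A_ce : CE A := by
  refine ⟨fun x => Nat.rfind fun m => Part.some (decide (F m.unpair.1 m.unpair.2 = some x)), ?_, ?_⟩
  · apply Partrec.nat_iff.1
    apply Partrec.rfind
    have hq : Primrec₂ fun (x m : ℕ) => decide (F m.unpair.1 m.unpair.2 = some x) :=
      Primrec.eq.comp
        (F_primrec.comp (Primrec.fst.comp (Primrec.unpair.comp Primrec.snd))
          (Primrec.snd.comp (Primrec.unpair.comp Primrec.snd)))
        (Primrec.option_some.comp Primrec.fst) |>.decide |>.to₂
    exact hq.to_comp.partrec₂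
  · ext x
    show x ∈ A ↔ (Nat.rfind (fun m => Part.some (decide (F m.unpair.1 m.unpair.2 = some x)) : ℕ →. Bool)).Dom
    refine Iff.trans ?_ Nat.rfind_dom.symm
    simp only [A, Set.mem_setOf_eq, Part.mem_some_iff]
    constructor
    · rintro ⟨p, hp⟩
      exact ⟨p, by simp [hp], fun {m} _ => trivial⟩
    · rintro ⟨n, hn, -⟩
      exact ⟨n, of_decide_eq_true hn.symm⟩

open Classical in
/-- canonical requirement index witnessing membership in `A`. -/
noncomputable def witE (x : ℕ) : ℕ :=
  if h : x ∈ A then (Classical.choose h).unpair.1 else 0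

theorem witE_spec {x : ℕ} (h : x ∈ A) :
    ∃ k n, G (witE x) k = some n ∧ n.unpair.2 = x := by
  have hp := Classical.choose_spec h
  rw [witE, dif_pos h]
  rcases Option.map_eq_some_iff.1 hp with ⟨n, hG, hx⟩
  exact ⟨_, n, hG, hx⟩

theorem witE_lt {x : ℕ} (h : x ∈ A) : 2 * witE x < x := by
  obtain ⟨k, n, hG, hx⟩ := witE_spec h
  have := (G_sound hG).2.1
  unfold P at this
  rcases h1 : (evaln n.unpair.1 (Denumerable.ofNat Code (witE x)) n.unpair.2).isSome with _ | _
  · rw [h1] at this; simp at this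
  · rw [h1] at this; simp at this; omega

theorem witE_inj {x y : ℕ} (hx : x ∈ A) (hy : y ∈ A) (h : witE x = witE y) : x = y := by
  obtain ⟨k1, n1, hG1, h1⟩ := witE_spec hx
  obtain ⟨k2, n2, hG2, h2⟩ := witE_spec hy
  rw [h] at hG1
  rw [← h1, ← h2, G_unique hG1 hG2]

open Classical in
theorem card_filter_le (e : ℕ) :
    ((Finset.range (2 * e + 1)).filter (· ∈ A)).card ≤ e := by
  have : ((Finset.range (2 * e + 1)).filter (· ∈ A)).card ≤ (Finset.range e).card := by
    apply Finset.card_le_card_of_injOn witE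
    · intro x hx
      simp only [Finset.mem_coe, Finset.mem_filter, Finset.mem_range] at hx
      have := witE_lt hx.2
      simp only [Finset.mem_coe, Finset.mem_range]
      omega
    · intro x hx y hy hxy
      simp only [Finset.coe_filter, Set.mem_setOf_eq, Finset.mem_range] at hx hy
      exact witE_inj hx.2 hy.2 hxy
  simpa using this

open Classical in
theorem compl_infinite : (Aᶜ).Infinite := by
  by_contra h
  rw [Set.not_infinite] at h
  set T := h.toFinset with hT
  have hsub : (Finset.range (2 * T.card + 1)).filter (fun x => ¬ (x ∈ A)) ⊆ T := by
    intro x hx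
    simp only [Finset.mem_filter] at hx
    rw [hT, Set.Finite.mem_toFinset]
    exact hx.2
  have h1 := Finset.card_le_card hsub
  have h2 := Finset.card_filter_add_card_filter_not
    (s := Finset.range (2 * T.card + 1)) (p := fun x => x ∈ A)
  have h3 := card_filter_le T.card
  rw [Finset.card_range] at h2
  omega

theorem P_sound {e n : ℕ} (h : P e n = true) :
    (evaln n.unpair.1 (Denumerable.ofNat Code e) n.unpair.2).isSome = true ∧
      2 * e < n.unpair.2 := by
  unfold P at h
  rcases h1 : (evaln n.unpair.1 (Denumerable.ofNat Code e) n.unpair.2).isSome with _ | _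
  · rw [h1] at h; simp at h
  · rw [h1] at h; simp at h; exact ⟨rfl, h⟩

theorem meets {W : Set ℕ} (hce : CE W) (hinf : W.Infinite) : (A ∩ W).Nonempty := by
  obtain ⟨fW, hfW, rfl⟩ := hce
  obtain ⟨c, hc⟩ := exists_code.1 hfW
  obtain ⟨x, hxW, hx⟩ := hinf.exists_gt (2 * Encodable.encode c)
  rw [PFun.mem_dom] at hxW
  obtain ⟨y, hy⟩ := hxW
  rw [← hc] at hy
  obtain ⟨k, hk⟩ := evaln_complete.1 hy
  have h1 : (evaln k c x).isSome = true := by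
    rw [Option.isSome_iff_exists]
    exact ⟨y, hk⟩
  have hP : P (Encodable.encode c) (Nat.pair k x) = true := by
    unfold P
    simp [Nat.unpair_pair, Denumerable.ofNat_encode, h1, hx]
  obtain ⟨m, hm⟩ := G_exists hP
  refine ⟨m.unpair.2, ⟨Nat.pair (Encodable.encode c) (Nat.pair k x + 1), ?_⟩, ?_⟩
  · simp only [Nat.unpair_pair, F, hm, Option.map_some]
  · rcases G_sound hm with ⟨-, hPm, -⟩
    obtain ⟨h2, -⟩ := P_sound hPm
    obtain ⟨y', hy'⟩ := Option.isSome_iff_exists.1 h2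
    have hy2 : y' ∈ evaln m.unpair.1 (Denumerable.ofNat Code (Encodable.encode c)) m.unpair.2 :=
      hy'
    have h3 := evaln_sound hy2
    rw [Denumerable.ofNat_encode, hc] at h3
    exact (PFun.mem_dom _ _).2 ⟨y', h3⟩

theorem main : ∃ A : Set ℕ, CE A ∧ (Aᶜ).Infinite ∧
    ∀ W : Set ℕ, CE W → W.Infinite → (A ∩ W).Nonempty :=
  ⟨A, A_ce, compl_infinite, fun _ hce hinf => meets hce hinf⟩

end SimpleSetAux2


/-- There exists a simple set: a computably enumerable set `A ⊆ ℕ` with infinite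
complement that meets every infinite computably enumerable set. -/
theorem exists_simple_set :
    ∃ A : Set ℕ, CE A ∧ (Aᶜ).Infinite ∧
      ∀ W : Set ℕ, CE W → W.Infinite → (A ∩ W).Nonempty := by
  exact SimpleSetAux2.main
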